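/- Assume the isotropic ADMM scheme, and assume in addition: (I.1) the sequence (β^k) is increasing and the series ∑_{k≥1} √(k/β^k) converges; (I.2) the stacked gradient operator u ↦ (D_h u, D_v u) from ℝ^N to ℝ^N × ℝ^N is injective (D has full rank). Then there exist z_h*, z_v*, u* ∈ ℝ^N with z_h^k → z_h*, z_v^k → z_v*, u^k → u*, and moreover z_h* = D_h u* and z_v* = D_v u*. -/

import Mathlib

open Matrix Filter Topology

/-- Euclidean norm of a vector in `ℝ^n`. -/
noncomputable def enorm' {n : ℕ} (v : Fin n → ℝ) : ℝ :=
  Real.sqrt (∑ i, (v i) ^ 2)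

/-- ℓ⁰ "norm": number of nonzero entries of a vector. -/
noncomputable def l0 {n : ℕ} (v : Fin n → ℝ) : ℕ :=
  (Finset.univ.filter fun i => v i ≠ 0).card

/-- Isotropic ℓ⁰ count: number of indices where the pair of entries is nonzero. -/
noncomputable def l02 {n : ℕ} (zh zv : Fin n → ℝ) : ℕ :=
  (Finset.univ.filter fun i => zh i ≠ 0 ∨ zv i ≠ 0).card

noncomputable def toE {n : ℕ} : (Fin n → ℝ) ≃ₗ[ℝ] EuclideanSpace ℝ (Fin n) :=
  (WithLp.linearEquiv 2 ℝ (Fin n → ℝ)).symm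

lemma enorm_eq_norm {n : ℕ} (v : Fin n → ℝ) : enorm' v = ‖toE v‖ := by
  rw [EuclideanSpace.norm_eq]
  simp [enorm', sq_abs, toE]

lemma enorm_nonneg' {n : ℕ} (v : Fin n → ℝ) : 0 ≤ enorm' v := Real.sqrt_nonneg _

lemma enorm_neg' {n : ℕ} (v : Fin n → ℝ) : enorm' (-v) = enorm' v := by
  rw [enorm_eq_norm, enorm_eq_norm, map_neg, norm_neg]

lemma enorm_add_le' {n : ℕ} (v w : Fin n → ℝ) : enorm' (v + w) ≤ enorm' v + enorm' w := by
  rw [enorm_eq_norm, enorm_eq_norm, enorm_eq_norm, map_add]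
  exact norm_add_le _ _

lemma enorm_sub_le' {n : ℕ} (v w : Fin n → ℝ) : enorm' (v - w) ≤ enorm' v + enorm' w := by
  rw [sub_eq_add_neg]
  exact (enorm_add_le' v (-w)).trans (by rw [enorm_neg'])

lemma enorm_smul' {n : ℕ} (c : ℝ) (v : Fin n → ℝ) : enorm' (c • v) = |c| * enorm' v := by
  rw [enorm_eq_norm, enorm_eq_norm, _root_.map_smul, norm_smul, Real.norm_eq_abs]

lemma enorm_zero' {n : ℕ} : enorm' (0 : Fin n → ℝ) = 0 := by
  rw [enorm_eq_norm, map_zero, norm_zero]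

set_option maxHeartbeats 2000000 in
/-- convergence of the isotropic ADMM scheme under the growth
condition (I.1) and the full-rank condition (I.2). -/
theorem isotropic_ADMM_convergence (M N : ℕ) (A : Matrix (Fin M) (Fin N) ℝ)
    (Dh Dv : Matrix (Fin N) (Fin N) ℝ) (g : Fin M → ℝ) (μ : ℝ) (hμ : 0 < μ)
    (zh zv u lh lv : ℕ → Fin N → ℝ) (β : ℕ → ℝ)
    (hβ : ∀ k, 0 < β k)
    -- (i): (z_h^{k+1}, z_v^{k+1}) minimizes the isotropic ℓ⁰ subproblem
    (hz : ∀ k, ∀ zh' zv' : Fin N → ℝ,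
      μ * (l02 (zh (k + 1)) (zv (k + 1)) : ℝ)
          + β k / 2 * (enorm' (zh (k + 1) - (Dh.mulVec (u k) + (β k)⁻¹ • lh k)) ^ 2
            + enorm' (zv (k + 1) - (Dv.mulVec (u k) + (β k)⁻¹ • lv k)) ^ 2)
        ≤ μ * (l02 zh' zv' : ℝ)
          + β k / 2 * (enorm' (zh' - (Dh.mulVec (u k) + (β k)⁻¹ • lh k)) ^ 2
            + enorm' (zv' - (Dv.mulVec (u k) + (β k)⁻¹ • lv k)) ^ 2))
    -- (ii): u^{k+1} minimizes the quadratic subproblem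
    (hu : ∀ k, ∀ v : Fin N → ℝ,
      1 / 2 * enorm' (A.mulVec (u (k + 1)) - g) ^ 2
          + β k / 2 * (enorm' (Dh.mulVec (u (k + 1)) - (zh (k + 1) - (β k)⁻¹ • lh k)) ^ 2
            + enorm' (Dv.mulVec (u (k + 1)) - (zv (k + 1) - (β k)⁻¹ • lv k)) ^ 2)
        ≤ 1 / 2 * enorm' (A.mulVec v - g) ^ 2
          + β k / 2 * (enorm' (Dh.mulVec v - (zh (k + 1) - (β k)⁻¹ • lh k)) ^ 2
            + enorm' (Dv.mulVec v - (zv (k + 1) - (β k)⁻¹ • lv k)) ^ 2))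
    -- (iii): dual updates
    (hlh : ∀ k, lh (k + 1) = lh k - β k • (zh (k + 1) - Dh.mulVec (u (k + 1))))
    (hlv : ∀ k, lv (k + 1) = lv k - β k • (zv (k + 1) - Dv.mulVec (u (k + 1))))
    -- (I.1): increasing penalties and summability
    (hmono : Monotone β)
    (hsum : Summable fun k : ℕ => Real.sqrt ((k : ℝ) / β k))
    -- (I.2): the stacked gradient operator is injective
    (hD : Function.Injective fun x : Fin N → ℝ => (Dh.mulVec x, Dv.mulVec x)) :
    ∃ zhstar zvstar ustar : Fin N → ℝ,
      Tendsto zh atTop (𝓝 zhstar) ∧ Tendsto zv atTop (𝓝 zvstar) ∧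
      Tendsto u atTop (𝓝 ustar) ∧
      zhstar = Dh.mulVec ustar ∧ zvstar = Dv.mulVec ustar := by
  -- abbreviations
  set r : ℕ → ℝ := fun k => enorm' (zh (k + 1) - (Dh.mulVec (u k) + (β k)⁻¹ • lh k)) with hrdef
  set s : ℕ → ℝ := fun k => enorm' (zv (k + 1) - (Dv.mulVec (u k) + (β k)⁻¹ • lv k)) with hsdef
  set p : ℕ → ℝ := fun k => enorm' (Dh.mulVec (u (k + 1)) - (zh (k + 1) - (β k)⁻¹ • lh k)) with hpdef
  set q : ℕ → ℝ := fun k => enorm' (Dv.mulVec (u (k + 1)) - (zv (k + 1) - (β k)⁻¹ • lv k)) with hqdef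
  set a : ℕ → ℝ := fun k => 1 / 2 * enorm' (A.mulVec (u k) - g) ^ 2 with hadef
  have hμN : (0:ℝ) ≤ μ * N := by positivity
  have hl02 : ∀ zh' zv' : Fin N → ℝ, (l02 zh' zv' : ℝ) ≤ N := by
    intro zh' zv'
    have : l02 zh' zv' ≤ N := by
      classical
      refine (Finset.card_filter_le _ _).trans ?_
      simp
    exact_mod_cast this
  -- Step 1
  have key1 : ∀ k, β k / 2 * (r k ^ 2 + s k ^ 2) ≤ μ * N := by
    intro k
    have h := hz k (Dh.mulVec (u k) + (β k)⁻¹ • lh k) (Dv.mulVec (u k) + (β k)⁻¹ • lv k)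
    simp only [sub_self, enorm_zero'] at h
    have h1 : (0:ℝ) ≤ μ * (l02 (zh (k+1)) (zv (k+1)) : ℝ) := by positivity
    have h2 : μ * (l02 (Dh.mulVec (u k) + (β k)⁻¹ • lh k) (Dv.mulVec (u k) + (β k)⁻¹ • lv k) : ℝ)
        ≤ μ * N := mul_le_mul_of_nonneg_left (hl02 _ _) hμ.le
    simp only [hrdef, hsdef]
    nlinarith [h, h1, h2]
  have sqbound : ∀ (x y : ℝ) (k : ℕ), 0 ≤ x → 0 ≤ y → β k / 2 * (x ^ 2 + y ^ 2) ≤ μ * N →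
      x ≤ Real.sqrt (2 * μ * N / β k) := by
    intro x y k hx hy h
    have hb := hβ k
    have hCnn : (0:ℝ) ≤ 2 * μ * N / β k := by positivity
    rw [Real.le_sqrt hx hCnn, le_div_iff₀ hb]
    nlinarith [sq_nonneg y]
  have hr : ∀ k, r k ≤ Real.sqrt (2 * μ * N / β k) :=
    fun k => sqbound _ (s k) k (enorm_nonneg' _) (enorm_nonneg' _) (key1 k)
  have hs : ∀ k, s k ≤ Real.sqrt (2 * μ * N / β k) := by
    intro k
    refine sqbound _ (r k) k (enorm_nonneg' _) (enorm_nonneg' _) ?_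
    have := key1 k; nlinarith [this]
  -- Step 2
  have key2 : ∀ k, a (k + 1) + β k / 2 * (p k ^ 2 + q k ^ 2) ≤ a k + μ * N := by
    intro k
    have h := hu k (u k)
    have e1 : Dh.mulVec (u k) - (zh (k + 1) - (β k)⁻¹ • lh k)
        = -(zh (k + 1) - (Dh.mulVec (u k) + (β k)⁻¹ • lh k)) := by abel
    have e2 : Dv.mulVec (u k) - (zv (k + 1) - (β k)⁻¹ • lv k)
        = -(zv (k + 1) - (Dv.mulVec (u k) + (β k)⁻¹ • lv k)) := by abel
    rw [e1, e2, enorm_neg', enorm_neg'] at h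
    have h2 := key1 k
    simp only [hadef, hpdef, hqdef, hrdef, hsdef] at *
    nlinarith [h, h2]
  have ha0 : ∀ k, 0 ≤ a k := by
    intro k; simp only [hadef]; positivity
  have hbpos : ∀ k, (0:ℝ) < β k / 2 := fun k => by have := hβ k; linarith
  have hak : ∀ k, a k ≤ a 0 + μ * N * k := by
    intro k
    induction k with
    | zero => simp
    | succ n ih =>
      have h := key2 n
      have hnn : 0 ≤ β n / 2 * (p n ^ 2 + q n ^ 2) := mul_nonneg (by linarith [hβ n]) (by positivity)
      push_cast
      push_cast at ih
      nlinarith [h, hnn, ih]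
  set C : ℝ := 2 * (a 0 + μ * N) with hCdef
  have hC : 0 ≤ C := by have := ha0 0; simp only [hCdef]; nlinarith
  have hpq : ∀ k, β k / 2 * (p k ^ 2 + q k ^ 2) ≤ C / 2 * (k + 1) := by
    intro k
    have h := key2 k
    have h2 := hak k
    have h3 := ha0 (k + 1)
    have h4 := ha0 0
    simp only [hCdef]
    nlinarith [h, h2, h3, h4]
  have sqbound2 : ∀ (x y : ℝ) (k : ℕ), 0 ≤ x → 0 ≤ y →
      β k / 2 * (x ^ 2 + y ^ 2) ≤ C / 2 * (k + 1) → x ≤ Real.sqrt (C * (k + 1) / β k) := by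
    intro x y k hx hy h
    have hb := hβ k
    have hCnn : (0:ℝ) ≤ C * (k + 1) / β k := by positivity
    rw [Real.le_sqrt hx hCnn, le_div_iff₀ hb]
    nlinarith [sq_nonneg y]
  have hp : ∀ k, p k ≤ Real.sqrt (C * (k + 1) / β k) :=
    fun k => sqbound2 _ (q k) k (enorm_nonneg' _) (enorm_nonneg' _) (hpq k)
  have hq : ∀ k, q k ≤ Real.sqrt (C * (k + 1) / β k) := by
    intro k
    refine sqbound2 _ (p k) k (enorm_nonneg' _) (enorm_nonneg' _) ?_
    have := hpq k; nlinarith [this]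
  -- dual identities
  have hlid : ∀ k, (β k)⁻¹ • lh (k + 1) = Dh.mulVec (u (k + 1)) - (zh (k + 1) - (β k)⁻¹ • lh k) := by
    intro k
    rw [hlh k, smul_sub, smul_smul, inv_mul_cancel₀ (hβ k).ne', one_smul]
    abel
  have hlidv : ∀ k, (β k)⁻¹ • lv (k + 1) = Dv.mulVec (u (k + 1)) - (zv (k + 1) - (β k)⁻¹ • lv k) := by
    intro k
    rw [hlv k, smul_sub, smul_smul, inv_mul_cancel₀ (hβ k).ne', one_smul]
    abel
  have hplh : ∀ k, enorm' ((β k)⁻¹ • lh (k + 1)) = p k := by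
    intro k; rw [hlid k]
  have hplv : ∀ k, enorm' ((β k)⁻¹ • lv (k + 1)) = q k := by
    intro k; rw [hlidv k]
  -- summability
  have hsum1 : Summable (fun k : ℕ => Real.sqrt (((k : ℝ) + 1) / β k)) := by
    rw [← summable_nat_add_iff 1]
    have hshift : Summable (fun n : ℕ => Real.sqrt ((((n : ℝ) + 1)) / β (n + 1))) := by
      have := (summable_nat_add_iff (f := fun k : ℕ => Real.sqrt ((k : ℝ) / β k)) 1).mpr hsum
      refine this.congr fun n => ?_
      push_cast
      ring_nf
    refine Summable.of_nonneg_of_le (fun k => Real.sqrt_nonneg _) ?_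
      (hshift.mul_left (Real.sqrt 2))
    intro k
    rw [← Real.sqrt_mul (by norm_num : (0:ℝ) ≤ 2)]
    apply Real.sqrt_le_sqrt
    rw [mul_div_assoc']
    have hb := hβ (k + 1)
    rw [div_le_div_iff_of_pos_right hb]
    push_cast
    linarith
  have hsum2 : Summable (fun k : ℕ => Real.sqrt (C * ((k : ℝ) + 1) / β k)) := by
    refine (hsum1.mul_left (Real.sqrt C)).congr fun k => ?_
    rw [mul_div_assoc, Real.sqrt_mul hC]
  have hsum3 : Summable (fun k : ℕ => Real.sqrt (2 * μ * N / β k)) := by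
    refine Summable.of_nonneg_of_le (fun k => Real.sqrt_nonneg _) ?_
      (hsum1.mul_left (Real.sqrt (2 * μ * N)))
    intro k
    rw [← Real.sqrt_mul (by positivity)]
    apply Real.sqrt_le_sqrt
    rw [mul_div_assoc']
    have hb := hβ k
    rw [div_le_div_iff_of_pos_right hb]
    nlinarith [hμN, Nat.cast_nonneg (α := ℝ) k]
  set d : ℕ → ℝ := fun k => Real.sqrt (2 * μ * N / β k) + Real.sqrt (C * ((k : ℝ) + 1) / β k)
    with hddef
  have hd : Summable d := hsum3.add hsum2
  -- Cauchy sequences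
  set xh : ℕ → EuclideanSpace ℝ (Fin N) := fun k => toE (Dh.mulVec (u k)) with hxhdef
  set xv : ℕ → EuclideanSpace ℝ (Fin N) := fun k => toE (Dv.mulVec (u k)) with hxvdef
  have hdisth : ∀ k, dist (xh k) (xh (k + 1)) ≤ d k := by
    intro k
    simp only [hxhdef]
    rw [dist_eq_norm, ← map_sub, ← enorm_eq_norm]
    have e : Dh.mulVec (u k) - Dh.mulVec (u (k + 1)) =
        -((Dh.mulVec (u (k + 1)) - (zh (k + 1) - (β k)⁻¹ • lh k))
          + (zh (k + 1) - (Dh.mulVec (u k) + (β k)⁻¹ • lh k))) := by abel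
    rw [e, enorm_neg']
    refine (enorm_add_le' _ _).trans ?_
    have e1 : enorm' (Dh.mulVec (u (k + 1)) - (zh (k + 1) - (β k)⁻¹ • lh k)) = p k := by
      simp only [hpdef]
    have e2 : enorm' (zh (k + 1) - (Dh.mulVec (u k) + (β k)⁻¹ • lh k)) = r k := by
      simp only [hrdef]
    rw [e1, e2]
    simp only [hddef]
    have := hp k
    have := hr k
    linarith
  have hdistv : ∀ k, dist (xv k) (xv (k + 1)) ≤ d k := by
    intro k
    simp only [hxvdef]
    rw [dist_eq_norm, ← map_sub, ← enorm_eq_norm]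
    have e : Dv.mulVec (u k) - Dv.mulVec (u (k + 1)) =
        -((Dv.mulVec (u (k + 1)) - (zv (k + 1) - (β k)⁻¹ • lv k))
          + (zv (k + 1) - (Dv.mulVec (u k) + (β k)⁻¹ • lv k))) := by abel
    rw [e, enorm_neg']
    refine (enorm_add_le' _ _).trans ?_
    have e1 : enorm' (Dv.mulVec (u (k + 1)) - (zv (k + 1) - (β k)⁻¹ • lv k)) = q k := by
      simp only [hqdef]
    have e2 : enorm' (zv (k + 1) - (Dv.mulVec (u k) + (β k)⁻¹ • lv k)) = s k := by
      simp only [hsdef]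
    rw [e1, e2]
    simp only [hddef]
    have := hq k
    have := hs k
    linarith
  obtain ⟨Lh, hLh⟩ := cauchySeq_tendsto_of_complete (cauchySeq_of_dist_le_of_summable d hdisth hd)
  obtain ⟨Lv, hLv⟩ := cauchySeq_tendsto_of_complete (cauchySeq_of_dist_le_of_summable d hdistv hd)
  -- convergence of D u^k in the plain pi space
  set Lh' : Fin N → ℝ := (WithLp.equiv 2 (Fin N → ℝ)) Lh with hLh'def
  set Lv' : Fin N → ℝ := (WithLp.equiv 2 (Fin N → ℝ)) Lv with hLv'def
  have hyh : Tendsto (fun k => Dh.mulVec (u k)) atTop (𝓝 Lh') := by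
    have h1 := ((PiLp.continuous_ofLp 2 (fun _ : Fin N => ℝ)).tendsto Lh).comp hLh
    refine h1.congr fun k => ?_
    simp only [Function.comp, hxhdef, toE]
    rfl
  have hyv : Tendsto (fun k => Dv.mulVec (u k)) atTop (𝓝 Lv') := by
    have h1 := ((PiLp.continuous_ofLp 2 (fun _ : Fin N => ℝ)).tendsto Lv).comp hLv
    refine h1.congr fun k => ?_
    simp only [Function.comp, hxvdef, toE]
    rfl
  -- the stacked operator
  set T : (Fin N → ℝ) →ₗ[ℝ] (Fin N → ℝ) × (Fin N → ℝ) :=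
    (Matrix.mulVecLin Dh).prod (Matrix.mulVecLin Dv) with hTdef
  have hTfun : ∀ x, T x = (Dh.mulVec x, Dv.mulVec x) := by
    intro x
    simp [hTdef, LinearMap.prod_apply, Matrix.mulVecLin_apply]
  have hT : Function.Injective T := by
    intro x y hxy
    apply hD
    simpa only [hTfun] using hxy
  have hrangeclosed : IsClosed (LinearMap.range T : Set ((Fin N → ℝ) × (Fin N → ℝ))) :=
    Submodule.closed_of_finiteDimensional _
  have hTend : Tendsto (fun k => T (u k)) atTop (𝓝 (Lh', Lv')) := by
    simp only [hTfun]
    exact hyh.prodMk_nhds hyv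
  have hmem : (Lh', Lv') ∈ LinearMap.range T :=
    hrangeclosed.mem_of_tendsto hTend
      (Eventually.of_forall fun k => LinearMap.mem_range_self T (u k))
  set e : (Fin N → ℝ) ≃ₗ[ℝ] LinearMap.range T := LinearEquiv.ofInjective T hT with hedef
  set ustar : Fin N → ℝ := e.symm ⟨(Lh', Lv'), hmem⟩ with hustardef
  have hTustar : T ustar = (Lh', Lv') := by
    have h1 := e.apply_symm_apply ⟨(Lh', Lv'), hmem⟩
    have h2 := congrArg Subtype.val h1
    rw [hedef] at h2
    rwa [LinearEquiv.ofInjective_apply] at h2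
  have hDhu : Dh.mulVec ustar = Lh' := congrArg Prod.fst ((hTfun ustar).symm.trans hTustar)
  have hDvu : Dv.mulVec ustar = Lv' := congrArg Prod.snd ((hTfun ustar).symm.trans hTustar)
  have hus : Tendsto u atTop (𝓝 ustar) := by
    have hcont : Continuous (e.symm : LinearMap.range T → (Fin N → ℝ)) :=
      LinearMap.continuous_of_finiteDimensional (e.symm : LinearMap.range T →ₗ[ℝ] (Fin N → ℝ))
    have h1 : Tendsto (fun k => (⟨T (u k), LinearMap.mem_range_self T (u k)⟩ :
        LinearMap.range T)) atTop (𝓝 ⟨(Lh', Lv'), hmem⟩) := by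
      rw [tendsto_subtype_rng]
      exact hTend
    have h2 := (hcont.tendsto _).comp h1
    refine h2.congr fun k => ?_
    simp only [Function.comp]
    have h3 : (⟨T (u k), LinearMap.mem_range_self T (u k)⟩ : LinearMap.range T) = e (u k) := by
      apply Subtype.ext
      rw [hedef, LinearEquiv.ofInjective_apply]
    rw [h3, e.symm_apply_apply]
  -- residuals tend to zero
  have hpz : Tendsto p atTop (𝓝 0) := by
    refine squeeze_zero (fun k => ?_) hp hsum2.tendsto_atTop_zero
    simp only [hpdef]; exact enorm_nonneg' _
  have hqz : Tendsto q atTop (𝓝 0) := by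
    refine squeeze_zero (fun k => ?_) hq hsum2.tendsto_atTop_zero
    simp only [hqdef]; exact enorm_nonneg' _
  have hinvmono : ∀ k, (β (k + 1))⁻¹ ≤ (β k)⁻¹ := fun k =>
    inv_anti₀ (hβ k) (hmono (Nat.le_succ k))
  have hresbound : ∀ k, enorm' (zh (k + 1 + 1) - Dh.mulVec (u (k + 1 + 1))) ≤ p k + p (k + 1) := by
    intro k
    have e1 : zh (k + 1 + 1) - Dh.mulVec (u (k + 1 + 1)) =
        (β (k + 1))⁻¹ • lh (k + 1) - (β (k + 1))⁻¹ • lh (k + 1 + 1) := by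
      rw [hlid (k + 1)]
      abel
    rw [e1]
    refine (enorm_sub_le' _ _).trans ?_
    have e2 : enorm' ((β (k + 1))⁻¹ • lh (k + 1 + 1)) = p (k + 1) := hplh (k + 1)
    have e3 : enorm' ((β (k + 1))⁻¹ • lh (k + 1)) ≤ p k := by
      rw [← hplh k]
      rw [enorm_smul', enorm_smul', abs_of_pos (inv_pos.mpr (hβ (k + 1))),
        abs_of_pos (inv_pos.mpr (hβ k))]
      exact mul_le_mul_of_nonneg_right (hinvmono k) (enorm_nonneg' _)
    rw [e2]
    linarith
  have hresboundv : ∀ k, enorm' (zv (k + 1 + 1) - Dv.mulVec (u (k + 1 + 1))) ≤ q k + q (k + 1) := by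
    intro k
    have e1 : zv (k + 1 + 1) - Dv.mulVec (u (k + 1 + 1)) =
        (β (k + 1))⁻¹ • lv (k + 1) - (β (k + 1))⁻¹ • lv (k + 1 + 1) := by
      rw [hlidv (k + 1)]
      abel
    rw [e1]
    refine (enorm_sub_le' _ _).trans ?_
    have e2 : enorm' ((β (k + 1))⁻¹ • lv (k + 1 + 1)) = q (k + 1) := hplv (k + 1)
    have e3 : enorm' ((β (k + 1))⁻¹ • lv (k + 1)) ≤ q k := by
      rw [← hplv k]
      rw [enorm_smul', enorm_smul', abs_of_pos (inv_pos.mpr (hβ (k + 1))),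
        abs_of_pos (inv_pos.mpr (hβ k))]
      exact mul_le_mul_of_nonneg_right (hinvmono k) (enorm_nonneg' _)
    rw [e2]
    linarith
  have hppz : Tendsto (fun k => p k + p (k + 1)) atTop (𝓝 0) := by
    have h1 : Tendsto (fun k => p (k + 1)) atTop (𝓝 0) := (tendsto_add_atTop_iff_nat 1).mpr hpz
    simpa using hpz.add h1
  have hqqz : Tendsto (fun k => q k + q (k + 1)) atTop (𝓝 0) := by
    have h1 : Tendsto (fun k => q (k + 1)) atTop (𝓝 0) := (tendsto_add_atTop_iff_nat 1).mpr hqz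
    simpa using hqz.add h1
  have hresh : Tendsto (fun k => enorm' (zh k - Dh.mulVec (u k))) atTop (𝓝 0) := by
    rw [← tendsto_add_atTop_iff_nat 2]
    exact squeeze_zero (fun k => enorm_nonneg' _) (fun k => hresbound k) hppz
  have hresv : Tendsto (fun k => enorm' (zv k - Dv.mulVec (u k))) atTop (𝓝 0) := by
    rw [← tendsto_add_atTop_iff_nat 2]
    exact squeeze_zero (fun k => enorm_nonneg' _) (fun k => hresboundv k) hqqz
  -- vector convergence of the residuals
  have hrvech : Tendsto (fun k => zh k - Dh.mulVec (u k)) atTop (𝓝 0) := by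
    have hE : Tendsto (fun k => toE (zh k - Dh.mulVec (u k))) atTop
        (𝓝 (0 : EuclideanSpace ℝ (Fin N))) := by
      rw [tendsto_zero_iff_norm_tendsto_zero]
      exact hresh.congr fun k => enorm_eq_norm _
    have h1 := ((PiLp.continuous_ofLp 2 (fun _ : Fin N => ℝ)).tendsto _).comp hE
    refine Tendsto.congr (fun k => ?_) (by simpa using h1)
    simp only [Function.comp, toE]
    rfl
  have hrvecv : Tendsto (fun k => zv k - Dv.mulVec (u k)) atTop (𝓝 0) := by
    have hE : Tendsto (fun k => toE (zv k - Dv.mulVec (u k))) atTop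
        (𝓝 (0 : EuclideanSpace ℝ (Fin N))) := by
      rw [tendsto_zero_iff_norm_tendsto_zero]
      exact hresv.congr fun k => enorm_eq_norm _
    have h1 := ((PiLp.continuous_ofLp 2 (fun _ : Fin N => ℝ)).tendsto _).comp hE
    refine Tendsto.congr (fun k => ?_) (by simpa using h1)
    simp only [Function.comp, toE]
    rfl
  have hzhconv : Tendsto zh atTop (𝓝 (Dh.mulVec ustar)) := by
    have h1 := hrvech.add hyh
    rw [hDhu]
    have h2 : (fun k => (zh k - Dh.mulVec (u k)) + Dh.mulVec (u k)) = zh :=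
      funext fun k => sub_add_cancel _ _
    rw [h2] at h1
    simpa using h1
  have hzvconv : Tendsto zv atTop (𝓝 (Dv.mulVec ustar)) := by
    have h1 := hrvecv.add hyv
    rw [hDvu]
    have h2 : (fun k => (zv k - Dv.mulVec (u k)) + Dv.mulVec (u k)) = zv :=
      funext fun k => sub_add_cancel _ _
    rw [h2] at h1
    simpa using h1
  exact ⟨Dh.mulVec ustar, Dv.mulVec ustar, ustar, hzhconv, hzvconv, hus, rfl, rfl⟩
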